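/- Let X be a metric space equipped with a convex bicombing and let C ⊆ X be a compact convex subset. If E ⊆ C is a minimal extremal subset of C (i.e. extremal and containing no proper extremal subset), then E consists of exactly one point; in particular, that point is an extremal point of C. -/

import Mathlib

open Set

/-- A convex bicombing on a metric space `X`: for each pair of points `x, y` a
continuous path `path x y : [0,1] → X` from `x` to `y`, with `path x x ≡ x`,
such that distances between paths are convex functions of the parameter. -/
structure ConvexBicombing (X : Type*) [MetricSpace X] where
  path : X → X → ℝ → X
  continuousOn : ∀ x y : X, ContinuousOn (path x y) (Icc 0 1)
  path_zero : ∀ x y : X, path x y 0 = x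
  path_one : ∀ x y : X, path x y 1 = y
  path_self : ∀ x : X, ∀ t ∈ Icc (0:ℝ) 1, path x x t = x
  dist_convexOn : ∀ x y x' y' : X,
    ConvexOn ℝ (Icc (0:ℝ) 1) (fun t => dist (path x y t) (path x' y' t))

/-- A set is convex with respect to the bicombing if it contains the path
between any two of its points. -/
def ConvexBicombing.IsConvexSet {X : Type*} [MetricSpace X] (B : ConvexBicombing X)
    (C : Set X) : Prop :=
  ∀ x ∈ C, ∀ y ∈ C, ∀ t ∈ Icc (0:ℝ) 1, B.path x y t ∈ C

/-- `E` is an extremal subset of the convex set `C`: it is closed, nonempty,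
contained in `C`, and whenever a path between points of `C` meets `E` at an
interior parameter, the whole path lies in `E`. -/
def ConvexBicombing.IsExtremal {X : Type*} [MetricSpace X] (B : ConvexBicombing X)
    (C E : Set X) : Prop :=
  IsClosed E ∧ E.Nonempty ∧ E ⊆ C ∧
    ∀ x ∈ C, ∀ y ∈ C, (∃ t ∈ Ioo (0:ℝ) 1, B.path x y t ∈ E) →
      ∀ s ∈ Icc (0:ℝ) 1, B.path x y s ∈ E

/-- A convex function on `[0,1]` bounded above by `M` that attains `M` at an
interior point is constantly `M`. -/
lemma convexOn_max_interior_const {g : ℝ → ℝ} {M t s : ℝ}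
    (hg : ConvexOn ℝ (Icc 0 1) g) (ht : t ∈ Ioo (0:ℝ) 1) (hgt : g t = M)
    (hle : ∀ u ∈ Icc (0:ℝ) 1, g u ≤ M) (hs : s ∈ Icc (0:ℝ) 1) : g s = M := by
  refine le_antisymm (hle s hs) ?_
  rcases lt_trichotomy s t with h | h | h
  · -- t is a convex combination of s and 1
    have hs1 : s < 1 := lt_of_lt_of_le h ht.2.le
    set a : ℝ := (1 - t) / (1 - s) with ha_def
    set b : ℝ := (t - s) / (1 - s) with hb_def
    have h1s : (0:ℝ) < 1 - s := by linarith
    have ha : 0 < a := div_pos (by linarith [ht.2]) h1s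
    have hb : 0 ≤ b := div_nonneg (by linarith) h1s.le
    have hne : (1:ℝ) - s ≠ 0 := h1s.ne'
    have hab : a + b = 1 := by rw [ha_def, hb_def]; field_simp; ring
    have hcomb : a • s + b • (1:ℝ) = t := by
      simp only [smul_eq_mul, ha_def, hb_def]
      field_simp
      ring
    have h1mem : (1:ℝ) ∈ Icc (0:ℝ) 1 := ⟨zero_le_one, le_refl 1⟩
    have := hg.2 hs h1mem ha.le hb hab
    rw [hcomb, hgt] at this
    have hg1 : g 1 ≤ M := hle 1 h1mem
    simp only [smul_eq_mul] at this
    have h1 : b * g 1 ≤ b * M := mul_le_mul_of_nonneg_left hg1 hb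
    have habM : a * M + b * M = M := by rw [← add_mul, hab, one_mul]
    have h2 : a * M ≤ a * g s := by linarith
    exact le_of_mul_le_mul_left h2 ha
  · rw [h, hgt]
  · -- t is a convex combination of 0 and s
    have hs0 : 0 < s := lt_trans ht.1 h
    set a : ℝ := 1 - t / s with ha_def
    set b : ℝ := t / s with hb_def
    have hb : 0 < b := div_pos ht.1 hs0
    have ha : 0 ≤ a := by
      have : t / s < 1 := (div_lt_one hs0).2 h
      linarith
    have hab : a + b = 1 := by ring
    have hcomb : a • (0:ℝ) + b • s = t := by
      simp only [smul_eq_mul, hb_def]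
      field_simp
      ring
    have h0mem : (0:ℝ) ∈ Icc (0:ℝ) 1 := ⟨le_refl 0, zero_le_one⟩
    have := hg.2 h0mem hs ha hb.le hab
    rw [hcomb, hgt] at this
    have hg0 : g 0 ≤ M := hle 0 h0mem
    simp only [smul_eq_mul] at this
    have h1 : a * g 0 ≤ a * M := mul_le_mul_of_nonneg_left hg0 ha
    have habM : a * M + b * M = M := by rw [← add_mul, hab, one_mul]
    have h2 : b * M ≤ b * g s := by linarith
    exact le_of_mul_le_mul_left h2 hb

/-- A minimal extremal subset of a compact convex set is a singleton, whose
element is an extremal point of `C`. -/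
theorem minimal_extremal_is_singleton {X : Type*} [MetricSpace X]
    (B : ConvexBicombing X) (C : Set X) (hC : IsCompact C) (hCconv : B.IsConvexSet C)
    (E : Set X) (hE : B.IsExtremal C E)
    (hmin : ∀ F : Set X, B.IsExtremal C F → F ⊆ E → F = E) :
    ∃ p : X, E = {p} ∧ p ∈ C ∧ B.IsExtremal C {p} := by
  obtain ⟨hEclosed, hEne, hEC, hEext⟩ := hE
  have hEcomp : IsCompact E := hC.of_isClosed_subset hEclosed hEC
  -- distance to any point is constant on E
  have key : ∀ p : X, ∀ x ∈ E, ∀ y ∈ E, dist x p = dist y p := by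
    intro p x hx y hy
    have hcont : Continuous fun z : X => dist z p :=
      Continuous.dist continuous_id continuous_const
    obtain ⟨m, hmE, hm⟩ := hEcomp.exists_isMaxOn hEne hcont.continuousOn
    set M : ℝ := dist m p with hM
    set F : Set X := {z ∈ E | dist z p = M} with hF
    have hFE : F ⊆ E := fun z hz => hz.1
    have hFext : B.IsExtremal C F := by
      refine ⟨?_, ⟨m, hmE, rfl⟩, hFE.trans hEC, ?_⟩
      · have : F = E ∩ (fun z : X => dist z p) ⁻¹' {M} := by
          ext z; simp [hF]
        rw [this]
        exact hEclosed.inter (isClosed_singleton.preimage hcont)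
      · intro a ha b hb ⟨t, htIoo, htF⟩ s hs
        have hpathE : ∀ u ∈ Icc (0:ℝ) 1, B.path a b u ∈ E :=
          hEext a ha b hb ⟨t, htIoo, htF.1⟩
        have hgconv : ConvexOn ℝ (Icc 0 1) (fun u => dist (B.path a b u) p) := by
          have h := B.dist_convexOn a b p p
          refine ⟨convex_Icc 0 1, ?_⟩
          intro u hu v hv c d hc hd hcd
          have hmem : c • u + d • v ∈ Icc (0:ℝ) 1 := (convex_Icc 0 1) hu hv hc hd hcd
          have h2 := h.2 hu hv hc hd hcd
          simp only [smul_eq_mul] at h2 hmem ⊢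
          rw [B.path_self p _ hu, B.path_self p _ hv, B.path_self p _ hmem] at h2
          exact h2
        have hle : ∀ u ∈ Icc (0:ℝ) 1, dist (B.path a b u) p ≤ M :=
          fun u hu => hm (hpathE u hu)
        exact ⟨hpathE s hs,
          convexOn_max_interior_const hgconv htIoo htF.2 hle hs⟩
    have hFeq : F = E := hmin F hFext hFE
    have hx' : dist x p = M := by rw [← hFeq] at hx; exact hx.2
    have hy' : dist y p = M := by rw [← hFeq] at hy; exact hy.2
    rw [hx', hy']
  obtain ⟨p, hp⟩ := hEne
  have hEp : E = {p} := by
    ext z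
    constructor
    · intro hz
      have := key p z hz p hp
      simp only [dist_self] at this
      exact dist_eq_zero.mp this
    · rintro rfl; exact hp
  exact ⟨p, hEp, hEC hp, hEp ▸ ⟨hEclosed, ⟨p, hp⟩, hEC, hEext⟩⟩
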